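/- Under the Case-C2 setup, assume additionally that it is not the case that both of the following hold: (the removal of v_1 disconnects d_1 from both sources) and (the removal of v_2 disconnects s_2 from both destinations). Then either there exists a path from s_1 to d_1 that does not contain v_1 and is disjoint from P_22, or there exists a path from s_2 to d_2 that does not contain v_2 and is disjoint from P_11. -/

import Mathlib

open List

/-- `IsPath E p u w` : the nonempty list `p` of vertices is a directed path
from `u` to `w` with respect to the edge relation `E`. -/
def IsPath {V : Type*} (E : V → V → Prop) (p : List V) (u w : V) : Prop :=
  p ≠ [] ∧ p.head? = some u ∧ p.getLast? = some w ∧ p.Chain' E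

/-- `Reaches E u w` (written `u ~> w`) : there is a directed path from `u` to `w`. -/
def Reaches {V : Type*} (E : V → V → Prop) (u w : V) : Prop :=
  ∃ p, IsPath E p u w

/-- A two-unicast layered network: a finite directed graph, with two sources
`s1, s2` and two destinations `d1, d2` (all four distinct), vertices partitioned
into layers `1, ..., r` such that every edge goes from a layer to the next one,
the first layer is `{s1, s2}`, the last layer is `{d1, d2}`, and each source
reaches its corresponding destination. -/
structure TwoUnicastNetwork (V : Type*) [Fintype V] where
  E : V → V → Prop
  s1 : V
  s2 : V
  d1 : V
  d2 : V
  r : ℕ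
  layer : V → ℕ
  layer_pos : ∀ v, 1 ≤ layer v
  layer_le : ∀ v, layer v ≤ r
  edge_layer : ∀ u w, E u w → layer w = layer u + 1
  s_ne : s1 ≠ s2
  d_ne : d1 ≠ d2
  sd_ne : ∀ s d, (s = s1 ∨ s = s2) → (d = d1 ∨ d = d2) → s ≠ d
  first_layer : ∀ v, layer v = 1 ↔ v = s1 ∨ v = s2
  last_layer : ∀ v, layer v = r ↔ v = d1 ∨ v = d2
  conn1 : Reaches E s1 d1
  conn2 : Reaches E s2 d2

/-- `InterferesOn N S Ri srcOther v` : within the induced subgraph `G[S]`, the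
node `v` causes interference on the path `Ri` : `v ∈ S`, `v ∉ Ri`, there is an
edge (inside `G[S]`) from `v` into a node of `Ri`, and there is a path from the
other source `srcOther` to `v` lying inside `G[S]` and disjoint from `Ri`. -/
def InterferesOn {V : Type*} [Fintype V] (N : TwoUnicastNetwork V) (S : Set V)
    (Ri : List V) (srcOther : V) (v : V) : Prop :=
  v ∈ S ∧ v ∉ Ri ∧ (∃ w ∈ Ri, w ∈ S ∧ N.E v w) ∧
    ∃ q, IsPath N.E q srcOther v ∧ (∀ x ∈ q, x ∈ S) ∧ ∀ x ∈ q, x ∉ Ri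

/-- `n_i(G[S])` : the number of nodes causing interference on `Ri` within the
induced subgraph `G[S]`, the interfering path coming from `srcOther`. -/
noncomputable def nInterf {V : Type*} [Fintype V] (N : TwoUnicastNetwork V)
    (S : Set V) (Ri : List V) (srcOther : V) : ℕ :=
  {v | InterferesOn N S Ri srcOther v}.ncard

/-- `n_i^D` : the number of nodes of the other path `Rother` causing (direct)
interference on `Ri` in `G`. -/
noncomputable def nDirect {V : Type*} [Fintype V] (N : TwoUnicastNetwork V)
    (Ri Rother : List V) (srcOther : V) : ℕ :=
  {v | InterferesOn N Set.univ Ri srcOther v ∧ v ∈ Rother}.ncard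

/-- The pair `(R1, R2)` (paths `s1 → d1` and `s2 → d2`) has manageable
interference: there is `S ⊇ R1 ∪ R2` with `n_1(G[S]) ≠ 1` and `n_2(G[S]) ≠ 1`. -/
def Manageable {V : Type*} [Fintype V] (N : TwoUnicastNetwork V)
    (R1 R2 : List V) : Prop :=
  ∃ S : Set V, (∀ x ∈ R1, x ∈ S) ∧ (∀ x ∈ R2, x ∈ S) ∧
    nInterf N S R1 N.s2 ≠ 1 ∧ nInterf N S R2 N.s1 ≠ 1

/-- The pair `(R1, R2)` has `(s1,d1)`-manageable interference. -/
def Manageable1 {V : Type*} [Fintype V] (N : TwoUnicastNetwork V)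
    (R1 R2 : List V) : Prop :=
  ∃ S : Set V, (∀ x ∈ R1, x ∈ S) ∧ (∀ x ∈ R2, x ∈ S) ∧ nInterf N S R1 N.s2 ≠ 1

/-- The pair `(R1, R2)` has `(s2,d2)`-manageable interference. -/
def Manageable2 {V : Type*} [Fintype V] (N : TwoUnicastNetwork V)
    (R1 R2 : List V) : Prop :=
  ∃ S : Set V, (∀ x ∈ R1, x ∈ S) ∧ (∀ x ∈ R2, x ∈ S) ∧ nInterf N S R2 N.s1 ≠ 1

/-- Removal of the vertex `v` disconnects `a` from `b` :
every path from `a` to `b` contains `v`. -/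
def CutVert {V : Type*} [Fintype V] (N : TwoUnicastNetwork V) (v a b : V) : Prop :=
  ∀ p, IsPath N.E p a b → v ∈ p



/-! ### Auxiliary lemmas -/

section Aux

variable {V : Type*}

private lemma split_first_aux (P : V → Prop) :
    ∀ p : List V, (∃ x ∈ p, P x) →
      ∃ a x b, p = a ++ x :: b ∧ P x ∧ ∀ y ∈ a, ¬ P y := by
  intro p
  induction p with
  | nil => rintro ⟨x, hx, _⟩; exact absurd hx List.not_mem_nil
  | cons h t ih =>
    intro hex
    by_cases hP : P h
    · exact ⟨[], h, t, rfl, hP, by simp⟩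
    · obtain ⟨x, hx, hPx⟩ := hex
      have hxt : x ∈ t := by
        rcases List.mem_cons.mp hx with rfl | h'
        · exact absurd hPx hP
        · exact h'
      obtain ⟨a, y, b, heq, hPy, ha⟩ := ih ⟨x, hxt, hPx⟩
      refine ⟨h :: a, y, b, by rw [heq]; rfl, hPy, ?_⟩
      intro z hz
      rcases List.mem_cons.mp hz with rfl | hz
      · exact hP
      · exact ha z hz

private lemma split_last_aux (P : V → Prop) :
    ∀ p : List V, (∃ x ∈ p, P x) →
      ∃ a x b, p = a ++ x :: b ∧ P x ∧ ∀ y ∈ b, ¬ P y := by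
  intro p
  induction p with
  | nil => rintro ⟨x, hx, _⟩; exact absurd hx List.not_mem_nil
  | cons h t ih =>
    intro hex
    by_cases ht : ∃ x ∈ t, P x
    · obtain ⟨a, y, b, heq, hPy, hb⟩ := ih ht
      exact ⟨h :: a, y, b, by rw [heq]; rfl, hPy, hb⟩
    · push_neg at ht
      obtain ⟨x, hx, hPx⟩ := hex
      have hxh : x = h := by
        rcases List.mem_cons.mp hx with rfl | hxt
        · rfl
        · exact absurd hPx (ht x hxt)
      subst hxh
      exact ⟨[], x, t, rfl, hPx, ht⟩

private lemma head?_append_cons {a : List V} (ha : a ≠ []) (x : V) (b : List V) :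
    (a ++ x :: b).head? = a.head? := by
  cases a with
  | nil => exact absurd rfl ha
  | cons h t => rfl

private lemma isPath_head_mem {E : V → V → Prop} {p : List V} {u w : V}
    (h : IsPath E p u w) : u ∈ p :=
  List.mem_of_mem_head? (by rw [h.2.1]; rfl)

private lemma isPath_last_mem {E : V → V → Prop} {p : List V} {u w : V}
    (h : IsPath E p u w) : w ∈ p :=
  List.mem_of_mem_getLast? (by rw [h.2.2.1]; rfl)

private lemma isPath_prefix {E : V → V → Prop} {a : List V} {x : V} {b : List V} {u w : V}
    (h : IsPath E (a ++ x :: b) u w) : IsPath E (a ++ [x]) u x := by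
  obtain ⟨-, hh, -, hc⟩ := h
  refine ⟨by simp, ?_, List.getLast?_concat, (List.isChain_split.mp hc).1⟩
  cases a with
  | nil => simpa using hh
  | cons h t =>
    rw [head?_append_cons (List.cons_ne_nil h t) x b] at hh
    rw [show (h :: t) ++ [x] = (h :: t) ++ x :: ([] : List V) from rfl,
      head?_append_cons (List.cons_ne_nil h t) x ([] : List V)]
    exact hh

private lemma isPath_suffix {E : V → V → Prop} {a : List V} {x : V} {b : List V} {u w : V}
    (h : IsPath E (a ++ x :: b) u w) : IsPath E (x :: b) x w := by
  obtain ⟨-, -, hl, hc⟩ := h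
  refine ⟨List.cons_ne_nil x b, rfl, ?_, (List.isChain_split.mp hc).2⟩
  rw [← List.getLast?_append_cons a x b]
  exact hl

private lemma isPath_append {E : V → V → Prop} {p q : List V} {u x w : V}
    (hp : IsPath E p u x) (hq : IsPath E (x :: q) x w) : IsPath E (p ++ q) u w := by
  obtain ⟨hpne, hph, hpl, hpc⟩ := hp
  obtain ⟨-, -, hql, hqc⟩ := hq
  have hxl : p.getLast hpne = x := by
    rw [List.getLast?_eq_getLast hpne] at hpl
    exact Option.some.inj hpl
  have hdec : p = p.dropLast ++ [x] := by
    conv_lhs => rw [← List.dropLast_append_getLast hpne]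
    rw [hxl]
  refine ⟨by simp [hpne], ?_, ?_, ?_⟩
  · rw [List.head?_append, hph]; rfl
  · have : p ++ q = p.dropLast ++ x :: q := by rw [hdec]; simp
    rw [this, List.getLast?_append_cons]
    exact hql
  · have : p ++ q = p.dropLast ++ x :: q := by rw [hdec]; simp
    rw [this]
    refine List.isChain_split.mpr ⟨?_, hqc⟩
    rw [← hdec]
    exact hpc

/-- Any path from `s2` that meets `P11` passes through both `v2` and `v1`. -/
private lemma lemA [Fintype V] (N : TwoUnicastNetwork V) (P11 P22 : List V) (v1 v2 : V)
    (hP22 : IsPath N.E P22 N.s2 N.d2) (hdisj : P11.Disjoint P22)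
    (hv2unique : {v | InterferesOn N Set.univ P11 N.s2 v} = {v2})
    (hv2P22 : v2 ∈ P22)
    (hedgeunique : ∀ u ∈ P22, ∀ w ∈ P11, N.E u w → u = v2 ∧ w = v1)
    {Q : List V} {t : V} (hQ : IsPath N.E Q N.s2 t)
    (hmem : ∃ x ∈ Q, x ∈ P11) : v2 ∈ Q ∧ v1 ∈ Q := by
  obtain ⟨a, x, b, hsplit, hxP11, ha⟩ := split_first_aux (· ∈ P11) Q hmem
  have hs2P22 : N.s2 ∈ P22 := isPath_head_mem hP22
  -- `a` is nonempty since the head of `Q` is `s2 ∉ P11`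
  have hane : a ≠ [] := by
    rintro rfl
    have : Q.head? = some x := by rw [hsplit]; rfl
    have hx : x = N.s2 := Option.some.inj (this.symm.trans hQ.2.1)
    exact hdisj hxP11 (hx ▸ hs2P22)
  set u := a.getLast hane with hu
  have hadec : a = a.dropLast ++ [u] := (List.dropLast_append_getLast hane).symm
  have hQdec : Q = a.dropLast ++ u :: x :: b := by
    rw [hsplit]
    conv_lhs => rw [hadec]
    simp
  -- the edge `u → x`
  have hchain : List.Chain' N.E (u :: x :: b) := by
    have := hQ.2.2.2
    rw [hQdec] at this
    exact (List.isChain_split.mp this).2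
  have hEux : N.E u x := (List.isChain_cons_cons.mp hchain).1
  -- the path `a` from `s2` to `u`
  have hpath_a : IsPath N.E a N.s2 u := by
    have h' : IsPath N.E (a.dropLast ++ [u]) N.s2 u := by
      have : IsPath N.E (a.dropLast ++ u :: x :: b) N.s2 t := by rw [← hQdec]; exact hQ
      have := isPath_prefix (a := a.dropLast ++ [u]) (x := x) (b := b)
        (by rw [show (a.dropLast ++ [u]) ++ x :: b = a.dropLast ++ u :: x :: b by simp]; exact this)
      exact isPath_prefix (a := a.dropLast) (x := u) (b := [x])
        (by rw [show a.dropLast ++ u :: [x] = (a.dropLast ++ [u]) ++ [x] by simp]; exact this)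
    rw [hadec]; exact h'
  have huA : u ∈ a := hadec ▸ (by simp)
  have hinterf : InterferesOn N Set.univ P11 N.s2 u :=
    ⟨Set.mem_univ u, ha u huA, ⟨x, hxP11, Set.mem_univ x, hEux⟩,
      ⟨a, hpath_a, fun y _ => Set.mem_univ y, fun y hy => ha y hy⟩⟩
  have huv2 : u = v2 := by
    have : u ∈ ({v | InterferesOn N Set.univ P11 N.s2 v} : Set V) := hinterf
    rw [hv2unique] at this
    exact this
  have hxv1 : x = v1 := (hedgeunique u (huv2 ▸ hv2P22) x hxP11 hEux).2
  constructor
  · rw [← huv2, hsplit]; exact List.mem_append.mpr (Or.inl huA)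
  · rw [← hxv1, hsplit]; exact List.mem_append.mpr (Or.inr (List.mem_cons_self))

/-- An `s1 → d1` path avoiding `v1` cannot meet `P22`. -/
private lemma lemB [Fintype V] (N : TwoUnicastNetwork V) (P11 P22 : List V) (v1 v2 : V)
    (hP11 : IsPath N.E P11 N.s1 N.d1)
    (hP22 : IsPath N.E P22 N.s2 N.d2) (hdisj : P11.Disjoint P22)
    (hv2unique : {v | InterferesOn N Set.univ P11 N.s2 v} = {v2})
    (hv2P22 : v2 ∈ P22)
    (hedgeunique : ∀ u ∈ P22, ∀ w ∈ P11, N.E u w → u = v2 ∧ w = v1)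
    {Q : List V} (hQ : IsPath N.E Q N.s1 N.d1) (hv1Q : v1 ∉ Q)
    (hmem : ∃ x ∈ Q, x ∈ P22) : False := by
  obtain ⟨a, x, b, hQsplit, hxP22, hb⟩ := split_last_aux (· ∈ P22) Q hmem
  have hd1P11 : N.d1 ∈ P11 := isPath_last_mem hP11
  -- `d1` lies in `b`
  have hd1xb : N.d1 ∈ x :: b := by
    have hl := hQ.2.2.1
    rw [hQsplit, List.getLast?_append_cons] at hl
    exact List.mem_of_mem_getLast? (by rw [hl]; rfl)
  have hd1b : N.d1 ∈ b := by
    rcases List.mem_cons.mp hd1xb with h | h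
    · exact absurd (h ▸ hxP22) (hdisj hd1P11)
    · exact h
  obtain ⟨c, z, e, hbsplit, hzP11, hc⟩ := split_first_aux (· ∈ P11) b ⟨N.d1, hd1b, hd1P11⟩
  have hchainxb : List.Chain' N.E (x :: b) := by
    have := hQ.2.2.2
    rw [hQsplit] at this
    exact (List.isChain_split.mp this).2
  have hzQ : z ∈ Q := by
    rw [hQsplit, hbsplit]
    simp
  rcases eq_or_ne c [] with rfl | hcne
  · -- immediate edge from `x ∈ P22` into `z ∈ P11` : then `z = v1 ∈ Q`
    rw [hbsplit] at hchainxb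
    have hExz : N.E x z := (List.isChain_cons_cons.mp hchainxb).1
    have hzv1 : z = v1 := (hedgeunique x hxP22 z hzP11 hExz).2
    exact hv1Q (hzv1 ▸ hzQ)
  · -- `c` nonempty : its last element `w` is a second interferer on `P11`
    set w := c.getLast hcne with hw
    have hcdec : c = c.dropLast ++ [w] := (List.dropLast_append_getLast hcne).symm
    have hwc : w ∈ c := hcdec ▸ (by simp)
    -- the edge `w → z`
    have hxbdec : x :: b = (x :: c.dropLast) ++ w :: z :: e := by
      rw [hbsplit]
      conv_lhs => rw [hcdec]
      simp
    have hEwz : N.E w z := by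
      have := hchainxb
      rw [hxbdec] at this
      exact (List.isChain_cons_cons.mp (List.isChain_split.mp this).2).1
    -- the path `x :: c` from `x` to `w` (inside `Q`)
    have hchainxc : List.Chain' N.E (x :: c) := by
      have := hchainxb
      rw [hxbdec] at this
      have h1 := (List.isChain_split.mp this).1
      rw [show (x :: c.dropLast) ++ [w] = x :: (c.dropLast ++ [w]) by simp, ← hcdec] at h1
      exact h1
    have hpath_xc : IsPath N.E (x :: c) x w := by
      refine ⟨List.cons_ne_nil x c, rfl, ?_, hchainxc⟩
      conv_lhs => rw [hcdec]
      rw [show x :: (c.dropLast ++ [w]) = (x :: c.dropLast) ++ [w] by simp]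
      exact List.getLast?_concat
    -- the prefix of `P22` up to `x`
    obtain ⟨f, x', g, hP22split, hx'x, -⟩ := split_first_aux (· = x) P22 ⟨x, hxP22, rfl⟩
    subst hx'x
    have hpath_fx : IsPath N.E (f ++ [x']) N.s2 x' := isPath_prefix (hP22split ▸ hP22)
    -- the combined path from `s2` to `w`
    have hpath_R : IsPath N.E ((f ++ [x']) ++ c) N.s2 w :=
      isPath_append hpath_fx (by rw [show x' :: c = x' :: c from rfl]; exact hpath_xc)
    have hRnotP11 : ∀ y ∈ (f ++ [x']) ++ c, y ∉ P11 := by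
      intro y hy hyP11
      rcases List.mem_append.mp hy with hy | hy
      · rcases List.mem_append.mp hy with hy | hy
        · have : y ∈ P22 := by rw [hP22split]; exact List.mem_append.mpr (Or.inl hy)
          exact hdisj hyP11 this
        · have : y = x' := by simpa using hy
          exact hdisj hyP11 (this ▸ hxP22)
      · exact hc y hy hyP11
    have hwnotP11 : w ∉ P11 := hc w hwc
    have hwb : w ∈ b := by rw [hbsplit]; exact List.mem_append.mpr (Or.inl hwc)
    have hwnotP22 : w ∉ P22 := hb w hwb
    have hinterf : InterferesOn N Set.univ P11 N.s2 w :=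
      ⟨Set.mem_univ w, hwnotP11, ⟨z, hzP11, Set.mem_univ z, hEwz⟩,
        ⟨(f ++ [x']) ++ c, hpath_R, fun y _ => Set.mem_univ y, hRnotP11⟩⟩
    have hwv2 : w = v2 := by
      have : w ∈ ({v | InterferesOn N Set.univ P11 N.s2 v} : Set V) := hinterf
      rw [hv2unique] at this
      exact this
    exact hwnotP22 (hwv2 ▸ hv2P22)

end Aux

theorem statement11 {V : Type*} [Fintype V]
    (N : TwoUnicastNetwork V)
    (P11 P22 : List V)
    (v1 v2 : V)
    (hP11 : IsPath N.E P11 N.s1 N.d1)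
    (hP22 : IsPath N.E P22 N.s2 N.d2)
    (hdisj : P11.Disjoint P22)
    (hNoMan : ∀ R1 R2 : List V, IsPath N.E R1 N.s1 N.d1 → IsPath N.E R2 N.s2 N.d2 →
      R1.Disjoint R2 → ¬ Manageable N R1 R2)
    (hn1 : nInterf N Set.univ P11 N.s2 = 1)
    (hn1D : nDirect N P11 P22 N.s2 = 1)
    (hv2unique : {v | InterferesOn N Set.univ P11 N.s2 v} = {v2})
    (hv2P22 : v2 ∈ P22)
    (hv1P11 : v1 ∈ P11)
    (hv2v1 : N.E v2 v1)
    (hedgeunique : ∀ u ∈ P22, ∀ w ∈ P11, N.E u w → u = v2 ∧ w = v1)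
    (hNotAprime : ¬ ((CutVert N v1 N.s1 N.d1 ∧ CutVert N v1 N.s2 N.d1) ∧
      (CutVert N v2 N.s2 N.d1 ∧ CutVert N v2 N.s2 N.d2))) :
    (∃ Q : List V, IsPath N.E Q N.s1 N.d1 ∧ v1 ∉ Q ∧ Q.Disjoint P22) ∨
    (∃ Q : List V, IsPath N.E Q N.s2 N.d2 ∧ v2 ∉ Q ∧ Q.Disjoint P11) := by
  have hs2P22 : N.s2 ∈ P22 := isPath_head_mem hP22
  have hd1P11 : N.d1 ∈ P11 := isPath_last_mem hP11
  rw [not_and_or, not_and_or, not_and_or] at hNotAprime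
  have notcut : ∀ v a b : V, ¬ CutVert N v a b → ∃ p, IsPath N.E p a b ∧ v ∉ p := by
    intro v a b h
    unfold CutVert at h
    push_neg at h
    exact h
  rcases hNotAprime with (h | h) | (h | h)
  · -- `v1` does not cut `s1 → d1`
    obtain ⟨Q, hQ, hvQ⟩ := notcut _ _ _ h
    left
    refine ⟨Q, hQ, hvQ, ?_⟩
    intro y hyQ hyP22
    exact lemB N P11 P22 v1 v2 hP11 hP22 hdisj hv2unique hv2P22 hedgeunique hQ hvQ
      ⟨y, hyQ, hyP22⟩
  · -- `v1` does not cut `s2 → d1` : impossible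
    obtain ⟨Q, hQ, hvQ⟩ := notcut _ _ _ h
    exact absurd ((lemA N P11 P22 v1 v2 hP22 hdisj hv2unique hv2P22 hedgeunique hQ
      ⟨N.d1, isPath_last_mem hQ, hd1P11⟩).2) hvQ
  · -- `v2` does not cut `s2 → d1` : impossible
    obtain ⟨Q, hQ, hvQ⟩ := notcut _ _ _ h
    exact absurd ((lemA N P11 P22 v1 v2 hP22 hdisj hv2unique hv2P22 hedgeunique hQ
      ⟨N.d1, isPath_last_mem hQ, hd1P11⟩).1) hvQ
  · -- `v2` does not cut `s2 → d2`
    obtain ⟨Q, hQ, hvQ⟩ := notcut _ _ _ h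
    right
    refine ⟨Q, hQ, hvQ, ?_⟩
    intro y hyQ hyP11
    exact hvQ ((lemA N P11 P22 v1 v2 hP22 hdisj hv2unique hv2P22 hedgeunique hQ
      ⟨y, hyQ, hyP11⟩).1)
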